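/- The Thue–Morse word is not eventually constant along any infinite arithmetic progression: for any a ≥ 1 and b, the sequence n ↦ t(an + b) is not eventually constant. -/

import Mathlib

/-- The Thue–Morse word: bit `n` is the parity of the number of 1s in the
binary expansion of `n`. -/
def tm (n : ℕ) : Fin 2 := Fin.ofNat 2 (Nat.digits 2 n).sum

open Fin.NatCast Fin.CommRing

lemma tm_zero : tm 0 = 0 := by simp [tm, Fin.ofNat_eq_cast]

lemma tm_two_mul (n : ℕ) : tm (2 * n) = tm n := by
  rcases Nat.eq_zero_or_pos n with h | h
  · simp [h]
  · unfold tm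
    simp only [Fin.ofNat_eq_cast]
    rw [Nat.digits_def' (by norm_num : 1 < 2) (by positivity)]
    simp [Nat.mul_div_cancel_left, Nat.mul_mod_right]

lemma tm_two_mul_add_one (n : ℕ) : tm (2 * n + 1) = tm n + 1 := by
  unfold tm
  simp only [Fin.ofNat_eq_cast]
  rw [Nat.digits_def' (by norm_num : 1 < 2) (by positivity)]
  have h1 : (2 * n + 1) % 2 = 1 := by omega
  have h2 : (2 * n + 1) / 2 = n := by omega
  rw [h1, h2]
  push_cast [List.sum_cons]
  ring

lemma tm_split : ∀ k u v, v < 2 ^ k → tm (2 ^ k * u + v) = tm u + tm v := by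
  intro k
  induction k with
  | zero =>
    intro u v hv
    interval_cases v
    simp [tm_zero]
  | succ k ih =>
    intro u v hv
    rcases Nat.even_or_odd v with ⟨w, hw⟩ | ⟨w, hw⟩
    · subst hw
      have hw' : w < 2 ^ k := by
        have : 2 ^ (k + 1) = 2 * 2 ^ k := by ring
        omega
      have e : 2 ^ (k + 1) * u + (w + w) = 2 * (2 ^ k * u + w) := by ring
      have e2 : w + w = 2 * w := by ring
      rw [e, tm_two_mul, ih u w hw', e2, tm_two_mul]
    · subst hw
      have hw' : w < 2 ^ k := by
        have : 2 ^ (k + 1) = 2 * 2 ^ k := by ring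
        omega
      have e : 2 ^ (k + 1) * u + (2 * w + 1) = 2 * (2 ^ k * u + w) + 1 := by ring
      rw [e, tm_two_mul_add_one, ih u w hw', tm_two_mul_add_one]
      ring

lemma tm_compl : ∀ (k x : ℕ), x < 2 ^ k → tm (2 ^ k - 1 - x) = ((k : ℕ) : Fin 2) + tm x := by
  intro k
  induction k with
  | zero =>
    intro x hx
    interval_cases x
    simp [tm_zero]
  | succ k ih =>
    intro x hx
    have hp : 0 < 2 ^ k := Nat.pow_pos (n := k) (by norm_num)
    have h2 : 2 ^ (k + 1) = 2 * 2 ^ k := by ring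
    rcases Nat.even_or_odd x with ⟨w, hw⟩ | ⟨w, hw⟩
    · subst hw
      have hw' : w < 2 ^ k := by omega
      have e : 2 ^ (k + 1) - 1 - (w + w) = 2 * (2 ^ k - 1 - w) + 1 := by omega
      have e2 : w + w = 2 * w := by ring
      rw [e, tm_two_mul_add_one, ih w hw', e2, tm_two_mul]
      push_cast
      ring
    · subst hw
      have hw' : w < 2 ^ k := by omega
      have e : 2 ^ (k + 1) - 1 - (2 * w + 1) = 2 * (2 ^ k - 1 - w) := by omega
      rw [e, tm_two_mul, ih w hw', tm_two_mul_add_one]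
      push_cast
      have h11 : (1 : Fin 2) + 1 = 0 := rfl
      calc (k : Fin 2) + tm w = (k : Fin 2) + tm w + ((1 : Fin 2) + 1) := by rw [h11, add_zero]
        _ = (k : Fin 2) + 1 + (tm w + 1) := by ring

lemma tm_mul_pred_pow (a k : ℕ) (ha : 1 ≤ a) (hak : a ≤ 2 ^ k) :
    tm (a * (2 ^ k - 1)) = (k : Fin 2) := by
  have hp : 0 < 2 ^ k := Nat.pow_pos (n := k) (by norm_num)
  have e1 : a * (2 ^ k - 1) + a = a * 2 ^ k := by
    rw [← Nat.mul_succ]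
    congr 1
    omega
  have e2 : 2 ^ k * (a - 1) + 2 ^ k = 2 ^ k * a := by
    rw [← Nat.mul_succ]
    congr 1
    omega
  have e3 : a * 2 ^ k = 2 ^ k * a := mul_comm _ _
  have e : a * (2 ^ k - 1) = 2 ^ k * (a - 1) + (2 ^ k - a) := by omega
  rw [e, tm_split k (a - 1) (2 ^ k - a) (by omega)]
  have e4 : 2 ^ k - a = 2 ^ k - 1 - (a - 1) := by omega
  rw [e4, tm_compl k (a - 1) (by omega)]
  have key : ∀ x y : Fin 2, x + (y + x) = y := by decide
  exact key _ _

theorem stmt_13 (a b : ℕ) (ha : 1 ≤ a) :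
    ¬ ∃ (c : Fin 2) (N : ℕ), ∀ n, N ≤ n → tm (a * n + b) = c := by
  rintro ⟨c, N, h⟩
  set k := b + N + 1 with hk
  have hlt : k < 2 ^ k := Nat.lt_two_pow_self (n := k)
  have hb : b < 2 ^ k := by omega
  have hN : N ≤ 2 ^ k := by omega
  have key : ∀ m, 1 ≤ m → tm (a * m) + tm b = c := by
    intro m hm
    have hn : N ≤ 2 ^ k * m := le_trans hN (Nat.le_mul_of_pos_right _ hm)
    have h' := h (2 ^ k * m) hn
    rw [show a * (2 ^ k * m) + b = 2 ^ k * (a * m) + b by ring] at h'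
    rw [tm_split k (a * m) b hb] at h'
    exact h'
  set j := 2 * a + 1 with hj
  have hja : a ≤ 2 ^ j := by
    have := Nat.lt_two_pow_self (n := j)
    omega
  have hja' : a ≤ 2 ^ (j + 1) := by
    have : 2 ^ j ≤ 2 ^ (j + 1) := Nat.pow_le_pow_right (by norm_num) (by omega)
    omega
  have hpj : 1 ≤ 2 ^ j - 1 := by
    have : 2 ≤ 2 ^ j := by
      calc 2 = 2 ^ 1 := rfl
        _ ≤ 2 ^ j := Nat.pow_le_pow_right (by norm_num) (by omega)
    omega
  have hpj' : 1 ≤ 2 ^ (j + 1) - 1 := by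
    have : 2 ^ j ≤ 2 ^ (j + 1) := Nat.pow_le_pow_right (by norm_num) (by omega)
    omega
  have h1 : tm (a * (2 ^ j - 1)) = 1 := by
    rw [tm_mul_pred_pow a j ha hja, hj]
    push_cast
    generalize (a : Fin 2) = x
    revert x
    decide
  have h2 : tm (a * (2 ^ (j + 1) - 1)) = 0 := by
    rw [tm_mul_pred_pow a (j + 1) ha hja', hj]
    push_cast
    generalize (a : Fin 2) = x
    revert x
    decide
  have e1 := key (2 ^ j - 1) hpj
  have e2 := key (2 ^ (j + 1) - 1) hpj'
  rw [h1] at e1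
  rw [h2] at e2
  have : (1 : Fin 2) + tm b = 0 + tm b := e1.trans e2.symm
  have := add_right_cancel this
  exact absurd this (by decide)
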